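/- Let S be a non-finitely-generated semigroup. Then scf(S) > ℵ₀ if and only if cf(S) > ℵ₀ and S has Bergman's property. -/

import Mathlib

open Pointwise

/-- `spowSet A k` is the set power `A^(k+1)`. -/
def spowSet {M : Type*} [Mul M] (A : Set M) : ℕ → Set M
  | 0 => A
  | k + 1 => spowSet A k * A

lemma spow_subset_closure {S : Type*} [Semigroup S] (A : Set S) :
    ∀ k, spowSet A k ⊆ (Subsemigroup.closure A : Set S)
  | 0 => Subsemigroup.subset_closure
  | k + 1 => by
    intro x hx
    obtain ⟨a, ha, b, hb, rfl⟩ := hx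
    exact mul_mem (spow_subset_closure A k ha) (Subsemigroup.subset_closure hb)

lemma spow_mul_spow {S : Type*} [Semigroup S] (A : Set S) (i : ℕ) :
    ∀ j, spowSet A i * spowSet A j ⊆ spowSet A (i + j + 1)
  | 0 => by
    show spowSet A i * A ⊆ spowSet A (i + 1)
    exact subset_of_eq rfl
  | j + 1 => by
    intro x hx
    rw [show spowSet A (j+1) = spowSet A j * A from rfl, ← mul_assoc] at hx
    obtain ⟨a, ha, b, hb, rfl⟩ := hx
    show a * b ∈ spowSet A (i + j + 1 + 1)
    exact Set.mul_mem_mul (spow_mul_spow A i j ha) hb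

lemma closure_eq_iUnion_spow {S : Type*} [Semigroup S] (A : Set S) :
    (Subsemigroup.closure A : Set S) = ⋃ m, spowSet A m := by
  apply subset_antisymm
  · have : Subsemigroup.closure A ≤
        { carrier := ⋃ m, spowSet A m,
          mul_mem' := by
            intro a b ha hb
            obtain ⟨i, hi⟩ := Set.mem_iUnion.mp ha
            obtain ⟨j, hj⟩ := Set.mem_iUnion.mp hb
            exact Set.mem_iUnion.mpr ⟨i + j + 1, spow_mul_spow A i j (Set.mul_mem_mul hi hj)⟩ } :=
      Subsemigroup.closure_le.mpr (Set.subset_iUnion (spowSet A) 0)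
    exact this
  · exact Set.iUnion_subset fun m => spow_subset_closure A m

/-- For a non-finitely-generated semigroup `S`: `scf(S) > ℵ₀` (no countable chain of
proper subsets `S₀ ⊆ S₁ ⊆ ⋯` with union `S` and `SₙSₙ ⊆ S_{n+1}`) if and only if
`cf(S) > ℵ₀` (no countable chain of proper subsemigroups with union `S`) and `S` has
Bergman's property (for every generating set `A` there is `n` with
`S = A ∪ A² ∪ ⋯ ∪ Aⁿ`). -/
theorem stmt17 {S : Type*} [Semigroup S]
    (hnfg : ¬∃ X : Set S, X.Finite ∧ Subsemigroup.closure X = ⊤) :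
    (¬∃ C : ℕ → Set S, (∀ m, C m ⊆ C (m + 1)) ∧ (∀ m, C m ≠ Set.univ) ∧
        (⋃ m, C m) = Set.univ ∧ (∀ m, ∀ s ∈ C m, ∀ t ∈ C m, s * t ∈ C (m + 1)))
      ↔ ((¬∃ C : ℕ → Subsemigroup S, (∀ m, C m ≤ C (m + 1)) ∧ (∀ m, C m ≠ ⊤) ∧
            (⋃ m, (C m : Set S)) = Set.univ) ∧
          (∀ A : Set S, Subsemigroup.closure A = ⊤ →
            ∃ n : ℕ, ∀ s : S, ∃ m ≤ n, s ∈ spowSet A m)) := by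
  constructor
  · intro hscf
    constructor
    · rintro ⟨C, hmono, hproper, hunion⟩
      exact hscf ⟨fun m => (C m : Set S), fun m => hmono m,
        fun m h => hproper m (SetLike.ext' (h.trans Subsemigroup.coe_top.symm)), hunion,
        fun m s hs t ht => hmono m (mul_mem hs ht)⟩
    · intro A hgen
      by_contra hB
      push_neg at hB
      apply hscf
      refine ⟨fun n => ⋃ m ∈ Finset.range (2 ^ n), spowSet A m, ?_, ?_, ?_, ?_⟩
      · intro n
        apply Set.iUnion₂_subset
        intro m hm
        exact Set.subset_iUnion₂ (s := fun m _ => spowSet A m) m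
          (Finset.mem_range.mpr (lt_of_lt_of_le (Finset.mem_range.mp hm)
            (Nat.pow_le_pow_right (by norm_num) (Nat.le_succ n))))
      · intro n h
        obtain ⟨s, hs⟩ := hB (2 ^ n - 1)
        have h' : (⋃ m ∈ Finset.range (2 ^ n), spowSet A m) = Set.univ := h
        have : s ∈ ⋃ m ∈ Finset.range (2 ^ n), spowSet A m := h' ▸ Set.mem_univ s
        obtain ⟨m, hm, hms⟩ := Set.mem_iUnion₂.mp this
        exact hs m (Nat.le_sub_one_of_lt (Finset.mem_range.mp hm)) hms
      · apply Set.eq_univ_of_univ_subset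
        intro s _
        have : s ∈ (Subsemigroup.closure A : Set S) := hgen ▸ Subsemigroup.mem_top s
        rw [closure_eq_iUnion_spow] at this
        obtain ⟨m, hm⟩ := Set.mem_iUnion.mp this
        exact Set.mem_iUnion.mpr ⟨m, Set.mem_iUnion₂.mpr
          ⟨m, Finset.mem_range.mpr (Nat.lt_two_pow_self (n := m)), hm⟩⟩
      · intro n s hs t ht
        obtain ⟨i, hi, his⟩ := Set.mem_iUnion₂.mp hs
        obtain ⟨j, hj, hjt⟩ := Set.mem_iUnion₂.mp ht
        refine Set.mem_iUnion₂.mpr ⟨i + j + 1, Finset.mem_range.mpr ?_,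
          spow_mul_spow A i j (Set.mul_mem_mul his hjt)⟩
        have hi' := Finset.mem_range.mp hi
        have hj' := Finset.mem_range.mp hj
        have : 2 ^ (n + 1) = 2 ^ n + 2 ^ n := by ring
        omega
  · rintro ⟨hcf, hB⟩ ⟨C, hmono, hproper, hunion, hmul⟩
    have hmono' : Monotone C := monotone_nat_of_le_succ hmono
    by_cases htop : ∀ m, Subsemigroup.closure (C m) ≠ ⊤
    · apply hcf
      refine ⟨fun m => Subsemigroup.closure (C m), fun m => Subsemigroup.closure_mono (hmono m),
        htop, ?_⟩
      apply Set.eq_univ_of_univ_subset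
      rw [← hunion]
      exact Set.iUnion_mono fun m => Subsemigroup.subset_closure
    · push_neg at htop
      obtain ⟨m, hm⟩ := htop
      obtain ⟨n, hn⟩ := hB (C m) hm
      have hpow : ∀ k, spowSet (C m) k ⊆ C (m + k) := by
        intro k
        induction k with
        | zero => exact subset_of_eq rfl
        | succ k ih =>
          intro x hx
          obtain ⟨a, ha, b, hb, rfl⟩ := hx
          exact hmul (m + k) a (ih ha) b (hmono' (Nat.le_add_right m k) hb)
      apply hproper (m + n)
      apply Set.eq_univ_of_univ_subset
      intro s _
      obtain ⟨k, hk, hks⟩ := hn s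
      exact hmono' (by omega) (hpow k hks)
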